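/- Let α ∈ (0,1) and λ > 0. Then the function t ↦ E_α(λ·t^α) is strictly increasing on [0,∞). -/

import Mathlib

noncomputable def mittagLeffler (α z : ℝ) : ℝ := ∑' n : ℕ, z ^ n / Real.Gamma (α * n + 1)

noncomputable def mittagLeffler2 (α β z : ℝ) : ℝ := ∑' n : ℕ, z ^ n / Real.Gamma (α * n + β)

open Real Filter

/-- From log-convexity: `Γ(x+α) ≥ (x+α-1)^α · Γ(x)` for `x ≥ 1`, `0 < α < 1`. -/
lemma gamma_ratio_lower (α x : ℝ) (hα : 0 < α) (hα1 : α < 1) (hx : 1 ≤ x) :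
    (x + α - 1) ^ α * Real.Gamma x ≤ Real.Gamma (x + α) := by
  have hs : (0:ℝ) < x + α - 1 := by linarith
  have ht : (0:ℝ) < x + α := by linarith
  have hb : (0:ℝ) < 1 - α := by linarith
  have hkey := Real.Gamma_mul_add_mul_le_rpow_Gamma_mul_rpow_Gamma hs ht hα hb (by ring)
  have hx' : α * (x + α - 1) + (1 - α) * (x + α) = x := by ring
  rw [hx'] at hkey
  have hG : Real.Gamma (x + α - 1) = Real.Gamma (x + α) / (x + α - 1) := by
    have := Real.Gamma_add_one (ne_of_gt hs)
    have h1 : x + α - 1 + 1 = x + α := by ring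
    rw [h1] at this
    field_simp [this]
    linarith [this]
  rw [hG] at hkey
  have hGpos : 0 < Real.Gamma (x + α) := Real.Gamma_pos_of_pos ht
  have hrw : (Real.Gamma (x + α) / (x + α - 1)) ^ α * Real.Gamma (x + α) ^ (1 - α)
      = Real.Gamma (x + α) / (x + α - 1) ^ α := by
    rw [Real.div_rpow (le_of_lt hGpos) (le_of_lt hs)]
    rw [div_mul_eq_mul_div, ← Real.rpow_add hGpos]
    norm_num
  rw [hrw] at hkey
  have hpow : (0:ℝ) < (x + α - 1) ^ α := Real.rpow_pos_of_pos hs α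
  rw [le_div_iff₀ hpow] at hkey
  linarith [hkey]

lemma ml_summable (α z : ℝ) (hα : 0 < α) (hα1 : α < 1) (hz : 0 ≤ z) :
    Summable (fun n : ℕ => z ^ n / Real.Gamma (α * n + 1)) := by
  apply summable_of_ratio_norm_eventually_le (r := 1/2) (by norm_num)
  have hGpos : ∀ n : ℕ, 0 < Real.Gamma (α * n + 1) := fun n =>
    Real.Gamma_pos_of_pos (by positivity)
  -- choose N so that (α n + α) ≥ (2z+1)^(1/α) for n ≥ N
  obtain ⟨N, hN⟩ := (tendsto_atTop_atTop.mp
    (tendsto_natCast_atTop_atTop.const_mul_atTop hα)) ((2*z+1) ^ (1/α))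
  filter_upwards [eventually_ge_atTop N] with n hn
  have hx : (1:ℝ) ≤ α * n + 1 := by
    have : (0:ℝ) ≤ α * n := by positivity
    linarith
  have hbig : (2*z+1) ^ (1/α) ≤ α * n + α := by
    calc (2*z+1) ^ (1/α) ≤ α * n := hN n hn
    _ ≤ α * n + α := by linarith
  have h2z : (0:ℝ) < 2*z+1 := by linarith
  have hbase : (0:ℝ) < (2*z+1) ^ (1/α) := Real.rpow_pos_of_pos h2z _
  have hmono : ((2*z+1) ^ (1/α)) ^ α ≤ (α * n + α) ^ α :=
    Real.rpow_le_rpow (le_of_lt hbase) hbig (le_of_lt hα)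
  rw [show ((2*z+1) ^ (1/α)) ^ α = 2*z+1 by
    rw [← Real.rpow_mul (le_of_lt h2z), one_div, inv_mul_cancel₀ (ne_of_gt hα),
      Real.rpow_one]] at hmono
  -- Γ(α(n+1)+1) ≥ (αn+α)^α Γ(αn+1) ≥ (2z+1) Γ(αn+1)
  have hgam : (α * n + α) ^ α * Real.Gamma (α * n + 1) ≤ Real.Gamma (α * (n+1) + 1) := by
    have := gamma_ratio_lower α (α * n + 1) hα hα1 hx
    have h1 : α * n + 1 + α - 1 = α * n + α := by ring
    have h2 : α * n + 1 + α = α * (n+1) + 1 := by push_cast; ring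
    rw [h1, h2] at this; exact this
  have hgam2 : (2*z+1) * Real.Gamma (α * n + 1) ≤ Real.Gamma (α * (n+1) + 1) := by
    calc (2*z+1) * Real.Gamma (α * n + 1)
        ≤ (α * n + α) ^ α * Real.Gamma (α * n + 1) := by
          apply mul_le_mul_of_nonneg_right hmono (le_of_lt (hGpos n))
      _ ≤ _ := hgam
  have hG1 : 0 < Real.Gamma (α * (n+1) + 1) := by
    have : (0:ℝ) < α * (n+1) + 1 := by positivity
    exact Real.Gamma_pos_of_pos this
  have hfn : (0:ℝ) ≤ z ^ n / Real.Gamma (α * n + 1) := by positivity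
  have hfn1 : (0:ℝ) ≤ z ^ (n+1) / Real.Gamma (α * (n+1) + 1) := by positivity
  rw [Real.norm_eq_abs, Real.norm_eq_abs]
  push_cast
  rw [abs_of_nonneg hfn, abs_of_nonneg hfn1]
  calc z ^ (n+1) / Real.Gamma (α * (↑n+1) + 1)
      ≤ z ^ (n+1) / ((2*z+1) * Real.Gamma (α * n + 1)) := by
        have : (2*z+1) * Real.Gamma (α * n + 1) ≤ Real.Gamma (α * (↑n+1) + 1) := by
          convert hgam2 using 3
        gcongr
    _ = (z/(2*z+1)) * (z ^ n / Real.Gamma (α*n+1)) := by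
        field_simp
        ring
    _ ≤ 1/2 * (z ^ n / Real.Gamma (α*n+1)) := by
        apply mul_le_mul_of_nonneg_right _ hfn
        rw [div_le_iff₀ h2z]
        linarith

lemma ml_lt (α x y : ℝ) (hα : 0 < α) (hα1 : α < 1) (hx : 0 ≤ x) (hxy : x < y) :
    mittagLeffler α x < mittagLeffler α y := by
  have hy : 0 ≤ y := le_trans hx (le_of_lt hxy)
  apply Summable.tsum_lt_tsum_of_nonneg (i := 1)
  · intro n
    have : 0 < Real.Gamma (α * n + 1) := Real.Gamma_pos_of_pos (by positivity)
    positivity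
  · intro n
    have hG : 0 < Real.Gamma (α * n + 1) := Real.Gamma_pos_of_pos (by positivity)
    gcongr
  · have hG : 0 < Real.Gamma (α * (1:ℕ) + 1) := Real.Gamma_pos_of_pos (by positivity)
    simp only [pow_one]
    gcongr
  · exact ml_summable α y hα hα1 hy

theorem ml_strictMono (α : ℝ) (hα : 0 < α) (hα1 : α < 1) (lam : ℝ) (hlam : 0 < lam) :
    StrictMonoOn (fun t : ℝ => mittagLeffler α (lam * t ^ α)) (Set.Ici 0) := by
  intro s hs t ht hst
  apply ml_lt α _ _ hα hα1
  · have : (0:ℝ) ≤ s ^ α := Real.rpow_nonneg hs α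
    positivity
  · apply mul_lt_mul_of_pos_left _ hlam
    exact Real.rpow_lt_rpow hs hst hα
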